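/- Let A be a real m×n matrix of rank ρ with SVD A = S_A Σ_A T_Aᵀ, let H be a real n×r matrix with r ≤ ρ, and set Ĥ = T_Aᵀ H. Then (i) σ_r(AH) ≥ σ_ρ(A)·σ_r(Ĥ_{ρ,r}) = σ_r(Ĥ_{ρ,r})/‖A⁺‖, and (ii) if rank(AH) = rank(Ĥ_{ρ,r}) = r, then ‖(AH)⁺‖ ≤ ‖A⁺‖·‖Ĥ_{ρ,r}⁺‖. -/

import Mathlib

open Matrix MeasureTheory ProbabilityTheory

/-- The `j`-th largest singular value (1-indexed; `0` for `j` out of range). -/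
noncomputable def sval {m n : ℕ} (A : Matrix (Fin m) (Fin n) ℝ) (j : ℕ) : ℝ :=
  if h : 1 ≤ j ∧ j ≤ n then
    Real.sqrt ((show (Aᵀ * A).IsHermitian by
        simpa using Matrix.isHermitian_conjTranspose_mul_self A).eigenvalues
      (Tuple.sort (show (Aᵀ * A).IsHermitian by
        simpa using Matrix.isHermitian_conjTranspose_mul_self A).eigenvalues ⟨n - j, by omega⟩))
  else 0

/-- The spectral norm of a real matrix. -/
noncomputable def spec {m n : ℕ} (A : Matrix (Fin m) (Fin n) ℝ) : ℝ :=
  ‖LinearMap.toContinuousLinearMap (Matrix.toEuclideanLin A)‖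

open Classical in
/-- The Moore–Penrose pseudo-inverse. -/
noncomputable def pinv {m n : ℕ} (M : Matrix (Fin m) (Fin n) ℝ) : Matrix (Fin n) (Fin m) ℝ :=
  if h : ∃ X : Matrix (Fin n) (Fin m) ℝ,
      M * X * M = M ∧ X * M * X = X ∧ (M * X)ᵀ = M * X ∧ (X * M)ᵀ = X * M
  then h.choose else 0

/-- Leading (northwestern) `k × l` submatrix. -/
def lead {m n : ℕ} (A : Matrix (Fin m) (Fin n) ℝ) (k l : ℕ) (hk : k ≤ m) (hl : l ≤ n) :
    Matrix (Fin k) (Fin l) ℝ :=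
  A.submatrix (Fin.castLE hk) (Fin.castLE hl)

/-- Schur complement of the leading `h × h` block in `A`. -/
noncomputable def schur {n : ℕ} (A : Matrix (Fin n) (Fin n) ℝ) (h : ℕ) (hh : h ≤ n) :
    Matrix (Fin (n - h)) (Fin (n - h)) ℝ :=
  A.submatrix (fun i => (⟨h + i.1, by have := i.isLt; omega⟩ : Fin n))
      (fun j => (⟨h + j.1, by have := j.isLt; omega⟩ : Fin n))
    - A.submatrix (fun i => (⟨h + i.1, by have := i.isLt; omega⟩ : Fin n)) (Fin.castLE hh)
      * (A.submatrix (Fin.castLE hh) (Fin.castLE hh))⁻¹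
      * A.submatrix (Fin.castLE hh) (fun j => (⟨h + j.1, by have := j.isLt; omega⟩ : Fin n))

/-- The distribution of a standard Gaussian random `m × n` matrix (as entrywise functions). -/
noncomputable def stdGaussianM (m n : ℕ) : Measure (Fin m → Fin n → ℝ) :=
  Measure.pi fun _ => Measure.pi fun _ => gaussianReal 0 1

/-- The `m × n` "diagonal" matrix of singular values of `A` in nonincreasing order. -/
noncomputable def svdSigma {m n : ℕ} (A : Matrix (Fin m) (Fin n) ℝ) : Matrix (Fin m) (Fin n) ℝ :=
  Matrix.of fun i j => if (i : ℕ) = (j : ℕ) then sval A ((i : ℕ) + 1) else 0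

namespace PNRP

open Finset

/-! ### Dot-product basics -/

lemma dot_nonneg {k : ℕ} (v : Fin k → ℝ) : 0 ≤ v ⬝ᵥ v :=
  Finset.sum_nonneg fun _ _ => mul_self_nonneg _

lemma dot_sq {k : ℕ} (v : Fin k → ℝ) : v ⬝ᵥ v = ∑ i, v i ^ 2 := by
  simp [dotProduct, sq]

lemma dot_mul_self' {p q : ℕ} (M : Matrix (Fin p) (Fin q) ℝ) (x : Fin q → ℝ) :
    (M *ᵥ x) ⬝ᵥ (M *ᵥ x) = x ⬝ᵥ ((Mᵀ * M) *ᵥ x) := by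
  rw [← Matrix.mulVec_mulVec, Matrix.dotProduct_mulVec x, Matrix.vecMul_transpose]

lemma dot_mul_self {p q : ℕ} (M : Matrix (Fin p) (Fin q) ℝ) (x : Fin q → ℝ) :
    (M *ᵥ x) ⬝ᵥ (M *ᵥ x) = x ⬝ᵥ ((Mᴴ * M) *ᵥ x) := by
  rw [Matrix.conjTranspose_eq_transpose_of_trivial]
  exact dot_mul_self' M x

lemma orth_dot {k : ℕ} {U : Matrix (Fin k) (Fin k) ℝ} (hU : Uᵀ * U = 1) (v : Fin k → ℝ) :
    (U *ᵥ v) ⬝ᵥ (U *ᵥ v) = v ⬝ᵥ v := by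
  rw [dot_mul_self' U v, hU, Matrix.one_mulVec]

lemma cauchy_dot {k : ℕ} (u v : Fin k → ℝ) :
    u ⬝ᵥ v ≤ Real.sqrt (u ⬝ᵥ u) * Real.sqrt (v ⬝ᵥ v) := by
  have h := Finset.sum_mul_sq_le_sq_mul_sq Finset.univ u v
  calc u ⬝ᵥ v ≤ |u ⬝ᵥ v| := le_abs_self _
    _ = Real.sqrt ((u ⬝ᵥ v) ^ 2) := (Real.sqrt_sq_eq_abs _).symm
    _ ≤ Real.sqrt ((∑ i, u i ^ 2) * ∑ i, v i ^ 2) := Real.sqrt_le_sqrt (by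
        simpa [dotProduct, sq, Finset.mul_sum] using h)
    _ = _ := by
        rw [Real.sqrt_mul (Finset.sum_nonneg fun i _ => sq_nonneg _), dot_sq u, dot_sq v]

lemma dot_single {a t : ℕ} (hta : t < a) (c : ℝ) :
    (fun i : Fin a => if (i : ℕ) = t then c else 0) ⬝ᵥ
      (fun i : Fin a => if (i : ℕ) = t then c else 0) = c ^ 2 := by
  rw [dotProduct, Finset.sum_eq_single (⟨t, hta⟩ : Fin a)]
  · simp [sq]
  · intro k _ hk
    have : ¬ (k : ℕ) = t := fun h => hk (Fin.ext h)
    simp [this]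
  · intro h
    exact absurd (Finset.mem_univ _) h

/-! ### Sum reindexing helpers -/

lemma sum_range_le_sum_fin {a b : ℕ} (f : Fin b → ℝ) (hf : ∀ j, 0 ≤ f j) :
    (∑ i ∈ Finset.range a, if h : i < b then f ⟨i, h⟩ else 0) ≤ ∑ j, f j := by
  set F : ℕ → ℝ := fun i => if h : i < b then f ⟨i, h⟩ else 0 with hF
  have hF0 : ∀ i, 0 ≤ F i := by
    intro i; rw [hF]; dsimp only; split
    · exact hf _
    · exact le_rfl
  have h1 : (∑ i ∈ Finset.range a, F i) ≤ ∑ i ∈ Finset.range (max a b), F i :=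
    Finset.sum_le_sum_of_subset_of_nonneg
      (Finset.range_subset_range.mpr (le_max_left _ _)) (fun i _ _ => hF0 i)
  have h2 : (∑ i ∈ Finset.range (max a b), F i) = ∑ i ∈ Finset.range b, F i := by
    refine (Finset.sum_subset (Finset.range_subset_range.mpr (le_max_right _ _)) ?_).symm
    intro x _ hx
    rw [Finset.mem_range] at hx
    exact dif_neg hx
  have h3 : (∑ i ∈ Finset.range b, F i) = ∑ j : Fin b, f j := by
    rw [← Fin.sum_univ_eq_sum_range]
    exact Finset.sum_congr rfl fun i _ => by rw [hF]; dsimp only; rw [dif_pos i.isLt]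
  calc (∑ i ∈ Finset.range a, F i) ≤ _ := h1
    _ = _ := h2
    _ = _ := h3

lemma sum_fin_le_sum_range {a b : ℕ} (hab : a ≤ b) (f : Fin b → ℝ) (hf : ∀ j, 0 ≤ f j) :
    (∑ i : Fin a, f (Fin.castLE hab i)) ≤ ∑ j, f j := by
  set F : ℕ → ℝ := fun i => if h : i < b then f ⟨i, h⟩ else 0 with hF
  have hF0 : ∀ i, 0 ≤ F i := by
    intro i; rw [hF]; dsimp only; split
    · exact hf _
    · exact le_rfl
  have h0 : (∑ i : Fin a, f (Fin.castLE hab i)) = ∑ i ∈ Finset.range a, F i := by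
    rw [← Fin.sum_univ_eq_sum_range]
    refine Finset.sum_congr rfl fun i _ => ?_
    rw [hF]; dsimp only; rw [dif_pos (lt_of_lt_of_le i.isLt hab)]
    rfl
  have h3 : (∑ i ∈ Finset.range b, F i) = ∑ j : Fin b, f j := by
    rw [← Fin.sum_univ_eq_sum_range]
    exact Finset.sum_congr rfl fun i _ => by rw [hF]; dsimp only; rw [dif_pos i.isLt]
  rw [h0, ← h3]
  exact Finset.sum_le_sum_of_subset_of_nonneg
    (Finset.range_subset_range.mpr hab) (fun i _ _ => hF0 i)

/-! ### Sorted eigenvalues and `sval` -/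

variable {p q : ℕ}

/-- sorted (ascending) eigenvalues of `Mᴴ M`. -/
noncomputable def sev (M : Matrix (Fin p) (Fin q) ℝ) (i : Fin q) : ℝ :=
  (Matrix.isHermitian_conjTranspose_mul_self M).eigenvalues
    (Tuple.sort (Matrix.isHermitian_conjTranspose_mul_self M).eigenvalues i)

lemma sev_nonneg (M : Matrix (Fin p) (Fin q) ℝ) (i : Fin q) : 0 ≤ sev M i :=
  Matrix.eigenvalues_conjTranspose_mul_self_nonneg M _

lemma sev_mono (M : Matrix (Fin p) (Fin q) ℝ) {i i' : Fin q} (h : i ≤ i') :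
    sev M i ≤ sev M i' :=
  Tuple.monotone_sort _ h

lemma sval_eq_sqrt_sev (M : Matrix (Fin p) (Fin q) ℝ) {j : ℕ} (h1 : 1 ≤ j) (h2 : j ≤ q) :
    sval M j = Real.sqrt (sev M ⟨q - j, by omega⟩) := by
  rw [sval, dif_pos ⟨h1, h2⟩]; rfl

lemma sval_nonneg (M : Matrix (Fin p) (Fin q) ℝ) (j : ℕ) : 0 ≤ sval M j := by
  rw [sval]; split
  · exact Real.sqrt_nonneg _
  · exact le_rfl

lemma sval_sq (M : Matrix (Fin p) (Fin q) ℝ) {j : ℕ} (h1 : 1 ≤ j) (h2 : j ≤ q) :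
    sval M j ^ 2 = sev M ⟨q - j, by omega⟩ := by
  rw [sval_eq_sqrt_sev M h1 h2, Real.sq_sqrt (sev_nonneg M _)]

lemma sval_antitone (M : Matrix (Fin p) (Fin q) ℝ) {j j' : ℕ} (h1 : 1 ≤ j) (h2 : j ≤ j')
    (h3 : j' ≤ q) : sval M j' ≤ sval M j := by
  rw [sval_eq_sqrt_sev M (le_trans h1 h2) h3, sval_eq_sqrt_sev M h1 (le_trans h2 h3)]
  exact Real.sqrt_le_sqrt (sev_mono M (by simp only [Fin.mk_le_mk]; omega))

lemma sev_eq_min_le (M : Matrix (Fin p) (Fin q) ℝ) (i : Fin q) (k : Fin q) :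
    sev M ⟨0, k.pos⟩ ≤ (Matrix.isHermitian_conjTranspose_mul_self M).eigenvalues i := by
  have h : (Matrix.isHermitian_conjTranspose_mul_self M).eigenvalues i
      = sev M ((Tuple.sort (Matrix.isHermitian_conjTranspose_mul_self M).eigenvalues).symm i) := by
    rw [sev, Equiv.apply_symm_apply]
  rw [h]
  exact sev_mono M (by simp [Fin.le_def])

lemma sev_ne_zero_iff (M : Matrix (Fin p) (Fin q) ℝ) (i : Fin q) :
    sev M i ≠ 0 ↔ q - M.rank ≤ (i : ℕ) := by
  classical
  set f := (Matrix.isHermitian_conjTranspose_mul_self M).eigenvalues with hf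
  have hrank : M.rank = Fintype.card {i // f i ≠ 0} := by
    rw [← (Matrix.isHermitian_conjTranspose_mul_self M).rank_eq_card_non_zero_eigs,
      Matrix.conjTranspose_eq_transpose_of_trivial, Matrix.rank_transpose_mul_self]
  have hrq : M.rank ≤ q := le_trans (Matrix.rank_le_card_width M) (by simp)
  set σ := Tuple.sort f with hσ
  have hScard : (Finset.univ.filter (fun i : Fin q => sev M i ≠ 0)).card = M.rank := by
    rw [hrank, ← Fintype.card_subtype]
    exact Fintype.card_congr (σ.subtypeEquiv fun i => Iff.rfl)
  have hup : ∀ i1 i2 : Fin q, i1 ≤ i2 → sev M i1 ≠ 0 → sev M i2 ≠ 0 := by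
    intro i1 i2 h12 h1
    have : 0 < sev M i1 := lt_of_le_of_ne (sev_nonneg M i1) (Ne.symm h1)
    exact ne_of_gt (lt_of_lt_of_le this (sev_mono M h12))
  constructor
  · intro hne
    have hsub : Finset.Ici i ⊆ Finset.univ.filter (fun i : Fin q => sev M i ≠ 0) := by
      intro j hj
      simp only [Finset.mem_filter, Finset.mem_univ, true_and]
      exact hup i j (Finset.mem_Ici.mp hj) hne
    have := Finset.card_le_card hsub
    rw [Fin.card_Ici, hScard] at this
    have := i.isLt
    omega
  · intro hge
    by_contra hz
    have hsub : Finset.univ.filter (fun i : Fin q => sev M i ≠ 0) ⊆ Finset.Ioi i := by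
      intro j hj
      simp only [Finset.mem_filter, Finset.mem_univ, true_and] at hj
      rw [Finset.mem_Ioi]
      by_contra hle
      push_neg at hle
      exact hj (le_antisymm (by simpa [hz] using sev_mono M hle) (sev_nonneg M j))
    have := Finset.card_le_card hsub
    rw [Fin.card_Ioi, hScard] at this
    have := i.isLt
    omega

lemma sval_pos (M : Matrix (Fin p) (Fin q) ℝ) {j : ℕ} (h1 : 1 ≤ j) (h2 : j ≤ M.rank) :
    0 < sval M j := by
  have hrq : M.rank ≤ q := le_trans (Matrix.rank_le_card_width M) (by simp)
  have hjq : j ≤ q := le_trans h2 hrq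
  rw [sval_eq_sqrt_sev M h1 hjq]
  refine Real.sqrt_pos.mpr (lt_of_le_of_ne (sev_nonneg M _) (Ne.symm ?_))
  rw [sev_ne_zero_iff]
  simp only
  omega

lemma sval_rank_zero (M : Matrix (Fin p) (Fin q) ℝ) {j : ℕ} (h2 : M.rank < j) :
    sval M j = 0 := by
  by_cases hj : 1 ≤ j ∧ j ≤ q
  · rw [sval_eq_sqrt_sev M hj.1 hj.2]
    have h : sev M ⟨q - j, by omega⟩ = 0 := by
      by_contra hne
      have hne' := (sev_ne_zero_iff M ⟨q - j, by omega⟩).mp hne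
      simp only at hne'
      have hrq : M.rank ≤ q := le_trans (Matrix.rank_le_card_width M) (by simp)
      omega
    rw [h, Real.sqrt_zero]
  · rw [sval, dif_neg hj]

/-! ### Quadratic form bounds -/

lemma qf_repr {q : ℕ} {N : Matrix (Fin q) (Fin q) ℝ} (hN : N.IsHermitian) (x : Fin q → ℝ) :
    ∃ y : Fin q → ℝ, y ⬝ᵥ y = x ⬝ᵥ x ∧ x ⬝ᵥ (N *ᵥ x) = ∑ i, hN.eigenvalues i * (y i) ^ 2 := by
  set U : Matrix (Fin q) (Fin q) ℝ := (hN.eigenvectorUnitary : Matrix (Fin q) (Fin q) ℝ) with hU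
  have hsU : star U = Uᵀ := by
    rw [Matrix.star_eq_conjTranspose, Matrix.conjTranspose_eq_transpose_of_trivial]
  have hUU : Uᵀ * U = 1 := by rw [← hsU]; exact Unitary.coe_star_mul_self _
  have hUU' : U * Uᵀ = 1 := mul_eq_one_comm.mp hUU
  refine ⟨Uᵀ *ᵥ x, ?_, ?_⟩
  · calc (Uᵀ *ᵥ x) ⬝ᵥ (Uᵀ *ᵥ x) = (x ᵥ* U) ⬝ᵥ (Uᵀ *ᵥ x) := by rw [Matrix.mulVec_transpose]
    _ = ((x ᵥ* U) ᵥ* Uᵀ) ⬝ᵥ x := by rw [Matrix.dotProduct_mulVec]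
    _ = x ⬝ᵥ x := by rw [Matrix.vecMul_vecMul, hUU', Matrix.vecMul_one]
  · conv_lhs => rw [hN.spectral_theorem, Unitary.conjStarAlgAut_apply]
    rw [hsU]
    have h : (RCLike.ofReal ∘ hN.eigenvalues : Fin q → ℝ) = hN.eigenvalues := by
      ext i; simp
    rw [h, ← Matrix.mulVec_mulVec, ← Matrix.mulVec_mulVec, Matrix.dotProduct_mulVec,
      ← Matrix.mulVec_transpose]
    simp only [dotProduct, Matrix.mulVec_diagonal]
    exact Finset.sum_congr rfl fun i _ => by ring

lemma sval_sq_le_dot (M : Matrix (Fin p) (Fin q) ℝ) (hq : 1 ≤ q) (x : Fin q → ℝ) :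
    sval M q ^ 2 * (x ⬝ᵥ x) ≤ (M *ᵥ x) ⬝ᵥ (M *ᵥ x) := by
  obtain ⟨y, hy1, hy2⟩ := qf_repr (Matrix.isHermitian_conjTranspose_mul_self M) x
  rw [dot_mul_self, hy2, ← hy1]
  have h0 : (⟨q - q, by omega⟩ : Fin q) = ⟨0, by omega⟩ := by simp
  rw [sval_sq M hq le_rfl, h0]
  have hterm : ∀ i : Fin q, sev M ⟨0, by omega⟩ * y i ^ 2
      ≤ (Matrix.isHermitian_conjTranspose_mul_self M).eigenvalues i * y i ^ 2 := fun i =>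
    mul_le_mul_of_nonneg_right (by simpa using sev_eq_min_le M i ⟨0, by omega⟩) (sq_nonneg _)
  calc sev M ⟨0, by omega⟩ * (y ⬝ᵥ y) = ∑ i, sev M ⟨0, by omega⟩ * y i ^ 2 := by
        rw [dot_sq, Finset.mul_sum]
    _ ≤ _ := Finset.sum_le_sum fun i _ => hterm i

lemma exists_min_vec (M : Matrix (Fin p) (Fin q) ℝ) (hq : 1 ≤ q) :
    ∃ x : Fin q → ℝ, x ⬝ᵥ x = 1 ∧ (M *ᵥ x) ⬝ᵥ (M *ᵥ x) = sval M q ^ 2 := by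
  set hN := Matrix.isHermitian_conjTranspose_mul_self M with hhN
  set j := Tuple.sort hN.eigenvalues ⟨0, by omega⟩ with hj
  set v : Fin q → ℝ := ⇑(hN.eigenvectorBasis j) with hv
  have h2 : ‖hN.eigenvectorBasis j‖ ^ 2 = 1 := by
    rw [(hN.eigenvectorBasis).orthonormal.1 j, one_pow]
  rw [EuclideanSpace.norm_eq, Real.sq_sqrt (Finset.sum_nonneg fun i _ => sq_nonneg _)] at h2
  have hvv : v ⬝ᵥ v = 1 := by
    rw [dot_sq, ← h2]
    exact Finset.sum_congr rfl fun i _ => by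
      rw [Real.norm_eq_abs, sq_abs]
  refine ⟨v, hvv, ?_⟩
  rw [dot_mul_self, hv, hN.mulVec_eigenvectorBasis j, ← hv, dotProduct_smul,
    smul_eq_mul, hvv, mul_one, sval_sq M hq le_rfl]
  have h0 : (⟨q - q, by omega⟩ : Fin q) = ⟨0, by omega⟩ := by simp
  rw [h0]
  rfl

/-! ### Spectral norm -/

lemma norm_symm_eq {k : ℕ} (v : Fin k → ℝ) :
    ‖(WithLp.equiv 2 (Fin k → ℝ)).symm v‖ = Real.sqrt (v ⬝ᵥ v) := by
  rw [EuclideanSpace.norm_eq, dot_sq]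
  congr 1
  exact Finset.sum_congr rfl fun i _ => by
    rw [WithLp.equiv_symm_apply, PiLp.toLp_apply, Real.norm_eq_abs, sq_abs]

lemma spec_nonneg (M : Matrix (Fin p) (Fin q) ℝ) : 0 ≤ spec M := norm_nonneg _

lemma spec_apply (M : Matrix (Fin p) (Fin q) ℝ) (x : EuclideanSpace ℝ (Fin q)) :
    (LinearMap.toContinuousLinearMap (Matrix.toEuclideanLin M)) x
      = (WithLp.equiv 2 (Fin p → ℝ)).symm (M *ᵥ (WithLp.equiv 2 (Fin q → ℝ)) x) := rfl

lemma spec_le (M : Matrix (Fin p) (Fin q) ℝ) {c : ℝ} (hc : 0 ≤ c)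
    (h : ∀ x : Fin q → ℝ, (M *ᵥ x) ⬝ᵥ (M *ᵥ x) ≤ c ^ 2 * (x ⬝ᵥ x)) : spec M ≤ c := by
  refine ContinuousLinearMap.opNorm_le_bound _ hc fun x => ?_
  rw [spec_apply, norm_symm_eq]
  have hx : x = (WithLp.equiv 2 (Fin q → ℝ)).symm ((WithLp.equiv 2 (Fin q → ℝ)) x) :=
    (Equiv.symm_apply_apply _ _).symm
  calc Real.sqrt ((M *ᵥ (WithLp.equiv 2 (Fin q → ℝ)) x) ⬝ᵥ (M *ᵥ (WithLp.equiv 2 (Fin q → ℝ)) x))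
      ≤ Real.sqrt (c ^ 2 * (((WithLp.equiv 2 (Fin q → ℝ)) x) ⬝ᵥ ((WithLp.equiv 2 (Fin q → ℝ)) x))) :=
        Real.sqrt_le_sqrt (h _)
    _ = c * ‖x‖ := by
        rw [Real.sqrt_mul (sq_nonneg c), Real.sqrt_sq hc]
        conv_rhs => rw [hx, norm_symm_eq]

lemma le_spec (M : Matrix (Fin p) (Fin q) ℝ) (x : Fin q → ℝ) :
    Real.sqrt ((M *ᵥ x) ⬝ᵥ (M *ᵥ x)) ≤ spec M * Real.sqrt (x ⬝ᵥ x) := by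
  have h := (LinearMap.toContinuousLinearMap (Matrix.toEuclideanLin M)).le_opNorm
    ((WithLp.equiv 2 (Fin q → ℝ)).symm x)
  rw [spec_apply, Equiv.apply_symm_apply, norm_symm_eq, norm_symm_eq] at h
  exact h

/-! ### Pseudo-inverse basics -/

lemma pinv_unique {M : Matrix (Fin p) (Fin q) ℝ} {X Y : Matrix (Fin q) (Fin p) ℝ}
    (hX1 : M * X * M = M) (hX2 : X * M * X = X) (hX3 : (M * X)ᵀ = M * X) (hX4 : (X * M)ᵀ = X * M)
    (hY1 : M * Y * M = M) (hY2 : Y * M * Y = Y) (hY3 : (M * Y)ᵀ = M * Y) (hY4 : (Y * M)ᵀ = Y * M) :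
    X = Y := by
  have hMX : M * X = M * Y := by
    calc M * X = (M * Y * M) * X := by rw [hY1]
      _ = (M * Y) * (M * X) := by rw [Matrix.mul_assoc]
      _ = (M * Y)ᵀ * (M * X)ᵀ := by rw [hY3, hX3]
      _ = Yᵀ * (M * X * M)ᵀ := by
          rw [Matrix.transpose_mul M Y, Matrix.transpose_mul (M * X) M, Matrix.mul_assoc]
      _ = Yᵀ * Mᵀ := by rw [hX1]
      _ = (M * Y)ᵀ := by rw [Matrix.transpose_mul]
      _ = M * Y := hY3
  have hXM : X * M = Y * M := by
    calc X * M = X * (M * Y * M) := by rw [hY1]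
      _ = (X * M) * (Y * M) := by simp only [Matrix.mul_assoc]
      _ = (X * M)ᵀ * (Y * M)ᵀ := by rw [hX4, hY4]
      _ = (M * (X * M))ᵀ * Yᵀ := by
          rw [Matrix.transpose_mul (Y : Matrix (Fin q) (Fin p) ℝ) M,
            Matrix.transpose_mul M (X * M), Matrix.mul_assoc]
      _ = Mᵀ * Yᵀ := by rw [← Matrix.mul_assoc, hX1]
      _ = (Y * M)ᵀ := by rw [Matrix.transpose_mul]
      _ = Y * M := hY4
  calc X = X * M * X := hX2.symm
    _ = X * (M * Y) := by rw [Matrix.mul_assoc, hMX]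
    _ = (X * M) * Y := by rw [Matrix.mul_assoc]
    _ = (Y * M) * Y := by rw [hXM]
    _ = Y := hY2

lemma pinv_eq {M : Matrix (Fin p) (Fin q) ℝ} {X : Matrix (Fin q) (Fin p) ℝ}
    (hX1 : M * X * M = M) (hX2 : X * M * X = X) (hX3 : (M * X)ᵀ = M * X)
    (hX4 : (X * M)ᵀ = X * M) : pinv M = X := by
  have hex : ∃ X : Matrix (Fin q) (Fin p) ℝ,
      M * X * M = M ∧ X * M * X = X ∧ (M * X)ᵀ = M * X ∧ (X * M)ᵀ = X * M :=
    ⟨X, hX1, hX2, hX3, hX4⟩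
  rw [pinv, dif_pos hex]
  obtain ⟨h1, h2, h3, h4⟩ := hex.choose_spec
  exact pinv_unique h1 h2 h3 h4 hX1 hX2 hX3 hX4

/-! ### Full column rank matrices -/

lemma gram_isUnit (M : Matrix (Fin p) (Fin q) ℝ) (hq : 1 ≤ q) (hrank : M.rank = q) :
    IsUnit (Mᵀ * M).det := by
  have hσ : 0 < sval M q := sval_pos M hq (le_of_eq hrank.symm)
  rw [← Matrix.isUnit_iff_isUnit_det, ← Matrix.mulVec_injective_iff_isUnit]
  intro x y hxy
  have hz : (Mᵀ * M) *ᵥ (x - y) = 0 := by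
    rw [Matrix.mulVec_sub, hxy, sub_self]
  have h1 : sval M q ^ 2 * ((x - y) ⬝ᵥ (x - y)) ≤ 0 := by
    calc sval M q ^ 2 * ((x - y) ⬝ᵥ (x - y)) ≤ (M *ᵥ (x - y)) ⬝ᵥ (M *ᵥ (x - y)) :=
          sval_sq_le_dot M hq _
      _ = (x - y) ⬝ᵥ ((Mᵀ * M) *ᵥ (x - y)) := dot_mul_self' M _
      _ = 0 := by rw [hz, dotProduct_zero]
  have h2 : (x - y) ⬝ᵥ (x - y) ≤ 0 := by
    by_contra hcon
    push_neg at hcon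
    have := mul_pos (pow_pos hσ 2) hcon
    linarith
  have h3 : (x - y) ⬝ᵥ (x - y) = 0 := le_antisymm h2 (dot_nonneg _)
  have h4 := dotProduct_self_eq_zero.mp h3
  exact sub_eq_zero.mp h4

lemma pinv_full_rank (M : Matrix (Fin p) (Fin q) ℝ) (hq : 1 ≤ q) (hrank : M.rank = q) :
    pinv M = (Mᵀ * M)⁻¹ * Mᵀ := by
  set B := Mᵀ * M with hB
  have hdet : IsUnit B.det := gram_isUnit M hq hrank
  have hBsymm : Bᵀ = B := by rw [hB, Matrix.transpose_mul, Matrix.transpose_transpose]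
  have hXM : (B⁻¹ * Mᵀ) * M = 1 := by
    rw [Matrix.mul_assoc, ← hB, Matrix.nonsing_inv_mul _ hdet]
  refine pinv_eq ?_ ?_ ?_ ?_
  · calc M * (B⁻¹ * Mᵀ) * M = M * ((B⁻¹ * Mᵀ) * M) := by rw [Matrix.mul_assoc]
      _ = M := by rw [hXM, Matrix.mul_one]
  · calc B⁻¹ * Mᵀ * M * (B⁻¹ * Mᵀ) = (B⁻¹ * Mᵀ * M) * (B⁻¹ * Mᵀ) := by rw [Matrix.mul_assoc]
      _ = B⁻¹ * Mᵀ := by rw [hXM, Matrix.one_mul]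
  · calc (M * (B⁻¹ * Mᵀ))ᵀ = M * (B⁻¹ᵀ * Mᵀ) := by
          rw [Matrix.transpose_mul, Matrix.transpose_mul, Matrix.transpose_transpose,
            Matrix.mul_assoc]
      _ = M * (B⁻¹ * Mᵀ) := by rw [Matrix.transpose_nonsing_inv, hBsymm]
  · rw [hXM, Matrix.transpose_one]

lemma spec_pinv_le (M : Matrix (Fin p) (Fin q) ℝ) (hq : 1 ≤ q) (hrank : M.rank = q) :
    spec (pinv M) ≤ (sval M q)⁻¹ := by
  have hσ : 0 < sval M q := sval_pos M hq (le_of_eq hrank.symm)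
  set B := Mᵀ * M with hB
  have hdet : IsUnit B.det := gram_isUnit M hq hrank
  rw [pinv_full_rank M hq hrank]
  refine spec_le _ (le_of_lt (inv_pos.mpr hσ)) fun y => ?_
  set w : Fin q → ℝ := (B⁻¹ * Mᵀ) *ᵥ y with hw
  have hBw : B *ᵥ w = Mᵀ *ᵥ y := by
    rw [hw, Matrix.mulVec_mulVec, ← Matrix.mul_assoc, Matrix.mul_nonsing_inv _ hdet,
      Matrix.one_mul]
  have ha2 : (M *ᵥ w) ⬝ᵥ (M *ᵥ w) = (M *ᵥ w) ⬝ᵥ y := by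
    rw [dot_mul_self' M w, ← hB, hBw, Matrix.dotProduct_mulVec w, Matrix.vecMul_transpose]
  have hMw_le : (M *ᵥ w) ⬝ᵥ (M *ᵥ w) ≤ y ⬝ᵥ y := by
    have hc := cauchy_dot (M *ᵥ w) y
    have ha : (M *ᵥ w) ⬝ᵥ (M *ᵥ w) = Real.sqrt ((M *ᵥ w) ⬝ᵥ (M *ᵥ w)) ^ 2 :=
      (Real.sq_sqrt (dot_nonneg _)).symm
    have hb : Real.sqrt (y ⬝ᵥ y) ^ 2 = y ⬝ᵥ y := Real.sq_sqrt (dot_nonneg _)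
    nlinarith [sq_nonneg (Real.sqrt ((M *ᵥ w) ⬝ᵥ (M *ᵥ w)) - Real.sqrt (y ⬝ᵥ y)),
      Real.sqrt_nonneg ((M *ᵥ w) ⬝ᵥ (M *ᵥ w)), Real.sqrt_nonneg (y ⬝ᵥ y)]
  have h1 : sval M q ^ 2 * (w ⬝ᵥ w) ≤ y ⬝ᵥ y := le_trans (sval_sq_le_dot M hq w) hMw_le
  rw [inv_pow, inv_mul_eq_div, le_div_iff₀ (pow_pos hσ 2)]
  nlinarith [h1]

lemma inv_sval_le_spec_pinv (M : Matrix (Fin p) (Fin q) ℝ) (hq : 1 ≤ q) (hrank : M.rank = q) :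
    (sval M q)⁻¹ ≤ spec (pinv M) := by
  have hσ : 0 < sval M q := sval_pos M hq (le_of_eq hrank.symm)
  obtain ⟨x, hx1, hx2⟩ := exists_min_vec M hq
  have hXM : (pinv M) * M = 1 := by
    rw [pinv_full_rank M hq hrank, Matrix.mul_assoc, Matrix.nonsing_inv_mul _
      (gram_isUnit M hq hrank)]
  have hxx : (pinv M) *ᵥ (M *ᵥ x) = x := by
    rw [Matrix.mulVec_mulVec, hXM, Matrix.one_mulVec]
  have h := le_spec (pinv M) (M *ᵥ x)
  rw [hxx, hx1, hx2, Real.sqrt_one, Real.sqrt_sq (le_of_lt hσ)] at h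
  rw [inv_le_iff_one_le_mul₀ hσ]
  exact h

/-! ### ℕ-indexed pseudo-diagonal matrices -/

def natdiag (a b : ℕ) (f : ℕ → ℝ) : Matrix (Fin a) (Fin b) ℝ :=
  Matrix.of fun i j => if (i : ℕ) = (j : ℕ) then f (i : ℕ) else 0

lemma natdiag_apply (a b : ℕ) (f : ℕ → ℝ) (i : Fin a) (j : Fin b) :
    natdiag a b f i j = if (i : ℕ) = (j : ℕ) then f (i : ℕ) else 0 := rfl

lemma natdiag_mul (a b c : ℕ) (f g : ℕ → ℝ) :
    natdiag a b f * natdiag b c g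
      = natdiag a c (fun k => if k < b then f k * g k else 0) := by
  ext i j
  rw [Matrix.mul_apply, natdiag_apply]
  by_cases hij : (i : ℕ) = (j : ℕ)
  · by_cases hib : (i : ℕ) < b
    · rw [if_pos hij]
      rw [Finset.sum_eq_single (⟨(i : ℕ), hib⟩ : Fin b)]
      · have hkj : ((⟨(i : ℕ), hib⟩ : Fin b) : ℕ) = (j : ℕ) := hij
        simp only [natdiag_apply, hkj, hib, hij, if_pos rfl, if_true]
        rw [if_pos (show (j : ℕ) < b from hij ▸ hib)]
      · intro k _ hk
        rw [natdiag_apply]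
        rw [if_neg (fun h => hk (Fin.ext h.symm)), zero_mul]
      · intro h
        exact absurd (Finset.mem_univ _) h
    · rw [if_pos hij, if_neg hib]
      refine Finset.sum_eq_zero fun k _ => ?_
      rw [natdiag_apply, if_neg (fun h : (i : ℕ) = (k : ℕ) => hib (by rw [h]; exact k.isLt)),
        zero_mul]
  · rw [if_neg hij]
    refine Finset.sum_eq_zero fun k _ => ?_
    by_cases h1 : (i : ℕ) = (k : ℕ)
    · have h2 : ¬ (k : ℕ) = (j : ℕ) := fun h2 => hij (h1.trans h2)
      simp [natdiag_apply, h2]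
    · simp [natdiag_apply, h1]

lemma natdiag_transpose (a b : ℕ) (f : ℕ → ℝ) :
    (natdiag a b f)ᵀ = natdiag b a f := by
  ext i j
  rw [Matrix.transpose_apply, natdiag_apply, natdiag_apply]
  by_cases h : (j : ℕ) = (i : ℕ)
  · rw [if_pos h, if_pos h.symm, h]
  · rw [if_neg h, if_neg (fun h' => h h'.symm)]

lemma natdiag_congr (a b : ℕ) {f g : ℕ → ℝ} (h : ∀ k, k < a → f k = g k) :
    natdiag a b f = natdiag a b g := by
  ext i j
  rw [natdiag_apply, natdiag_apply]
  by_cases hij : (i : ℕ) = (j : ℕ)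
  · rw [if_pos hij, if_pos hij, h _ i.isLt]
  · rw [if_neg hij, if_neg hij]

lemma natdiag_mulVec (a b : ℕ) (f : ℕ → ℝ) (y : Fin b → ℝ) (i : Fin a) :
    (natdiag a b f *ᵥ y) i = if h : (i : ℕ) < b then f (i : ℕ) * y ⟨(i : ℕ), h⟩ else 0 := by
  rw [Matrix.mulVec, dotProduct]
  by_cases hib : (i : ℕ) < b
  · rw [dif_pos hib]
    rw [Finset.sum_eq_single (⟨(i : ℕ), hib⟩ : Fin b)]
    · rw [natdiag_apply, if_pos rfl]
    · intro k _ hk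
      rw [natdiag_apply, if_neg (fun h => hk (Fin.ext h.symm)), zero_mul]
    · intro h
      exact absurd (Finset.mem_univ _) h
  · rw [dif_neg hib]
    refine Finset.sum_eq_zero fun k _ => ?_
    rw [natdiag_apply, if_neg (fun h : (i : ℕ) = (k : ℕ) => hib (by rw [h]; exact k.isLt)),
      zero_mul]

end PNRP

namespace PNRP

lemma spec_pinv_svd {m n : ℕ} (A : Matrix (Fin m) (Fin n) ℝ) (ρ : ℕ) (hρ : A.rank = ρ)
    (hρn : ρ ≤ n) (hρm : ρ ≤ m) (hρ1 : 1 ≤ ρ)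
    (S : Matrix (Fin m) (Fin m) ℝ) (T : Matrix (Fin n) (Fin n) ℝ)
    (hS : Sᵀ * S = 1) (hT : Tᵀ * T = 1) (hA : A = S * svdSigma A * Tᵀ) :
    spec (pinv A) = (sval A ρ)⁻¹ := by
  have hσρ : 0 < sval A ρ := sval_pos A hρ1 (le_of_eq hρ.symm)
  set σ' : ℕ → ℝ := fun k => sval A (k + 1) with hσ'
  have hSig : svdSigma A = natdiag m n σ' := rfl
  set g : ℕ → ℝ := fun k => if k < ρ then (σ' k)⁻¹ else 0 with hg
  have hσ'pos : ∀ k, k < ρ → 0 < σ' k := fun k hk =>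
    sval_pos A (by omega) (by omega)
  have hσ'zero : ∀ k, ρ ≤ k → σ' k = 0 := fun k hk =>
    sval_rank_zero A (by omega)
  have hσ'le : ∀ k, k < ρ → sval A ρ ≤ σ' k := fun k hk =>
    sval_antitone A (by omega) (by omega) hρn
  set d : ℕ → ℝ := fun k => if k < ρ then (1 : ℝ) else 0 with hd
  have hG1 : natdiag m n σ' * natdiag n m g = natdiag m m d := by
    rw [natdiag_mul]
    refine natdiag_congr _ _ fun k hk => ?_
    by_cases hkρ : k < ρ
    · rw [if_pos (lt_of_lt_of_le hkρ hρn), hg, hd]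
      dsimp only
      rw [if_pos hkρ, if_pos hkρ, mul_inv_cancel₀ (ne_of_gt (hσ'pos k hkρ))]
    · rw [hd]; dsimp only; rw [if_neg hkρ]
      by_cases hkn : k < n
      · rw [if_pos hkn, hg]; dsimp only; rw [if_neg hkρ, mul_zero]
      · rw [if_neg hkn]
  have hG2 : natdiag n m g * natdiag m n σ' = natdiag n n d := by
    rw [natdiag_mul]
    refine natdiag_congr _ _ fun k hk => ?_
    by_cases hkρ : k < ρ
    · rw [if_pos (lt_of_lt_of_le hkρ hρm), hg, hd]
      dsimp only
      rw [if_pos hkρ, if_pos hkρ, inv_mul_cancel₀ (ne_of_gt (hσ'pos k hkρ))]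
    · rw [hd]; dsimp only; rw [if_neg hkρ]
      by_cases hkm : k < m
      · rw [if_pos hkm, hg]; dsimp only; rw [if_neg hkρ, zero_mul]
      · rw [if_neg hkm]
  have hG3 : natdiag m m d * natdiag m n σ' = natdiag m n σ' := by
    rw [natdiag_mul]
    refine natdiag_congr _ _ fun k hk => ?_
    rw [if_pos hk, hd]; dsimp only
    by_cases hkρ : k < ρ
    · rw [if_pos hkρ, one_mul]
    · rw [if_neg hkρ, zero_mul, hσ'zero k (by omega)]
  have hG4 : natdiag n n d * natdiag n m g = natdiag n m g := by
    rw [natdiag_mul]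
    refine natdiag_congr _ _ fun k hk => ?_
    rw [if_pos hk, hd]; dsimp only
    by_cases hkρ : k < ρ
    · rw [if_pos hkρ, one_mul]
    · rw [if_neg hkρ, zero_mul, hg]; dsimp only; rw [if_neg hkρ]
  set P : Matrix (Fin n) (Fin m) ℝ := T * natdiag n m g * Sᵀ with hP
  have hAP : A * P = S * natdiag m m d * Sᵀ := by
    rw [hA, hP, hSig]
    simp only [Matrix.mul_assoc]
    rw [← Matrix.mul_assoc Tᵀ T, hT, Matrix.one_mul,
      ← Matrix.mul_assoc (natdiag m n σ'), hG1]
  have hPA : P * A = T * natdiag n n d * Tᵀ := by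
    conv_lhs => rw [hA]
    rw [hP, hSig]
    simp only [Matrix.mul_assoc]
    rw [← Matrix.mul_assoc Sᵀ S, hS, Matrix.one_mul,
      ← Matrix.mul_assoc (natdiag n m g), hG2]
  have h1 : A * P * A = A := by
    rw [hAP]
    conv_lhs => rw [hA, hSig]
    simp only [Matrix.mul_assoc]
    rw [← Matrix.mul_assoc Sᵀ S, hS, Matrix.one_mul,
      ← Matrix.mul_assoc (natdiag m m d), hG3, ← Matrix.mul_assoc, ← hSig, ← hA]
  have h2 : P * A * P = P := by
    rw [hPA]
    conv_lhs => rw [hP]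
    conv_rhs => rw [hP]
    simp only [Matrix.mul_assoc]
    rw [← Matrix.mul_assoc Tᵀ T, hT, Matrix.one_mul,
      ← Matrix.mul_assoc (natdiag n n d), hG4]
  have h3 : (A * P)ᵀ = A * P := by
    rw [hAP, Matrix.transpose_mul, Matrix.transpose_mul, Matrix.transpose_transpose,
      natdiag_transpose]
    simp only [Matrix.mul_assoc]
  have h4 : (P * A)ᵀ = P * A := by
    rw [hPA, Matrix.transpose_mul, Matrix.transpose_mul, Matrix.transpose_transpose,
      natdiag_transpose]
    simp only [Matrix.mul_assoc]
  have hpinv : pinv A = P := pinv_eq h1 h2 h3 h4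
  have hSS' : S * Sᵀ = 1 := mul_eq_one_comm.mp hS
  have hupper : spec P ≤ (sval A ρ)⁻¹ := by
    refine spec_le _ (le_of_lt (inv_pos.mpr hσρ)) fun x => ?_
    have hPx : P *ᵥ x = T *ᵥ (natdiag n m g *ᵥ (Sᵀ *ᵥ x)) := by
      rw [hP, ← Matrix.mulVec_mulVec, ← Matrix.mulVec_mulVec]
    rw [hPx, orth_dot hT]
    have hww : (Sᵀ *ᵥ x) ⬝ᵥ (Sᵀ *ᵥ x) = x ⬝ᵥ x :=
      orth_dot (by rw [Matrix.transpose_transpose]; exact hSS') x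
    rw [← hww]
    rw [dot_sq (natdiag n m g *ᵥ (Sᵀ *ᵥ x))]
    have hterm : ∀ i : Fin n, ((natdiag n m g *ᵥ (Sᵀ *ᵥ x)) i) ^ 2
        ≤ (sval A ρ)⁻¹ ^ 2 * (if h : (i : ℕ) < m then ((Sᵀ *ᵥ x) ⟨(i : ℕ), h⟩) ^ 2 else 0) := by
      intro i
      rw [natdiag_mulVec]
      by_cases him : (i : ℕ) < m
      · rw [dif_pos him, dif_pos him, mul_pow]
        refine mul_le_mul_of_nonneg_right ?_ (sq_nonneg _)
        rw [hg]; dsimp only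
        by_cases hiρ : (i : ℕ) < ρ
        · rw [if_pos hiρ]
          have hle : (σ' (i : ℕ))⁻¹ ≤ (sval A ρ)⁻¹ :=
            inv_anti₀ hσρ (hσ'le _ hiρ)
          have hnn : (0 : ℝ) ≤ (σ' (i : ℕ))⁻¹ := le_of_lt (inv_pos.mpr (hσ'pos _ hiρ))
          exact pow_le_pow_left₀ hnn hle 2
        · rw [if_neg hiρ]
          have h00 : ((0 : ℝ)) ^ 2 = 0 := by norm_num
          rw [h00]
          positivity
      · rw [dif_neg him, dif_neg him, mul_zero]
        norm_num
    calc (∑ i : Fin n, ((natdiag n m g *ᵥ (Sᵀ *ᵥ x)) i) ^ 2)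
        ≤ ∑ i : Fin n, (sval A ρ)⁻¹ ^ 2
            * (if h : (i : ℕ) < m then ((Sᵀ *ᵥ x) ⟨(i : ℕ), h⟩) ^ 2 else 0) :=
          Finset.sum_le_sum fun i _ => hterm i
      _ = (sval A ρ)⁻¹ ^ 2
            * ∑ i : Fin n, (if h : (i : ℕ) < m then ((Sᵀ *ᵥ x) ⟨(i : ℕ), h⟩) ^ 2 else 0) := by
          rw [Finset.mul_sum]
      _ ≤ (sval A ρ)⁻¹ ^ 2 * ((Sᵀ *ᵥ x) ⬝ᵥ (Sᵀ *ᵥ x)) := by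
          refine mul_le_mul_of_nonneg_left ?_ (by positivity)
          rw [dot_sq]
          rw [Fin.sum_univ_eq_sum_range
            (fun k => if h : k < m then ((Sᵀ *ᵥ x) ⟨k, h⟩) ^ 2 else 0) n]
          exact sum_range_le_sum_fin (fun j : Fin m => ((Sᵀ *ᵥ x) j) ^ 2)
            (fun j => sq_nonneg _)
  have hlower : (sval A ρ)⁻¹ ≤ spec P := by
    have hein : ρ - 1 < n := by omega
    have heim : ρ - 1 < m := by omega
    have hSpe : natdiag n m g *ᵥ (fun j : Fin m => if (j : ℕ) = ρ - 1 then (1 : ℝ) else 0)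
        = fun i : Fin n => if (i : ℕ) = ρ - 1 then (sval A ρ)⁻¹ else 0 := by
      funext i
      rw [natdiag_mulVec]
      by_cases him : (i : ℕ) < m
      · rw [dif_pos him]
        by_cases hi : (i : ℕ) = ρ - 1
        · rw [if_pos hi, if_pos hi, mul_one, hg]
          dsimp only
          rw [if_pos (show (i : ℕ) < ρ by omega)]
          congr 1
          rw [hσ']
          show sval A ((i : ℕ) + 1) = sval A ρ
          congr 1
          omega
        · rw [if_neg hi, if_neg hi, mul_zero]
      · rw [dif_neg him, if_neg (fun h : (i : ℕ) = ρ - 1 => him (by omega))]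
    have hx := le_spec P (S *ᵥ (fun j : Fin m => if (j : ℕ) = ρ - 1 then (1 : ℝ) else 0))
    have hPxe : P *ᵥ (S *ᵥ (fun j : Fin m => if (j : ℕ) = ρ - 1 then (1 : ℝ) else 0))
        = T *ᵥ (natdiag n m g *ᵥ (fun j : Fin m => if (j : ℕ) = ρ - 1 then (1 : ℝ) else 0)) := by
      rw [hP, ← Matrix.mulVec_mulVec, ← Matrix.mulVec_mulVec,
        Matrix.mulVec_mulVec _ Sᵀ S, hS, Matrix.one_mulVec]
    rw [hPxe, orth_dot hT, hSpe, orth_dot hS, dot_single hein, dot_single heim, one_pow,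
      Real.sqrt_one, mul_one, Real.sqrt_sq (by positivity)] at hx
    exact hx
  rw [hpinv]
  exact le_antisymm hupper hlower

end PNRP

/-- (i) `σ_r(AH) ≥ σ_ρ(A)·σ_r(Ĥ_{ρ,r}) = σ_r(Ĥ_{ρ,r})/‖A⁺‖`;
(ii) if `rank(AH) = rank(Ĥ_{ρ,r}) = r` then `‖(AH)⁺‖ ≤ ‖A⁺‖·‖Ĥ_{ρ,r}⁺‖`,
where `Ĥ = T_Aᵀ H`. -/
theorem pinv_norm_right_product {m n r : ℕ} (A : Matrix (Fin m) (Fin n) ℝ)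
    (ρ : ℕ) (hρ : A.rank = ρ) (hρn : ρ ≤ n)
    (S : Matrix (Fin m) (Fin m) ℝ) (T : Matrix (Fin n) (Fin n) ℝ)
    (hS : Sᵀ * S = 1) (hT : Tᵀ * T = 1) (hA : A = S * svdSigma A * Tᵀ)
    (H : Matrix (Fin n) (Fin r) ℝ) (hr : r ≤ ρ) :
    (sval A ρ * sval (lead (Tᵀ * H) ρ r hρn le_rfl) r ≤ sval (A * H) r ∧
     sval A ρ * sval (lead (Tᵀ * H) ρ r hρn le_rfl) r =
       sval (lead (Tᵀ * H) ρ r hρn le_rfl) r / spec (pinv A)) ∧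
    ((A * H).rank = r → (lead (Tᵀ * H) ρ r hρn le_rfl).rank = r →
      spec (pinv (A * H)) ≤ spec (pinv A) * spec (pinv (lead (Tᵀ * H) ρ r hρn le_rfl))) := by
  by_cases hr0 : r = 0
  · subst hr0
    have hsv1 : sval (A * H) 0 = 0 := by rw [sval, dif_neg (by omega)]
    have hsv2 : sval (lead (Tᵀ * H) ρ 0 hρn le_rfl) 0 = 0 := by rw [sval, dif_neg (by omega)]
    refine ⟨⟨?_, ?_⟩, ?_⟩
    · rw [hsv1, hsv2, mul_zero]
    · rw [hsv2, mul_zero, zero_div]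
    · intro _ _
      refine le_trans (PNRP.spec_le _ le_rfl fun x => ?_)
        (mul_nonneg (PNRP.spec_nonneg _) (PNRP.spec_nonneg _))
      simp [dotProduct]
  · have hr1 : 1 ≤ r := by omega
    have hρ1 : 1 ≤ ρ := le_trans hr1 hr
    have hρm : ρ ≤ m := by
      rw [← hρ]; exact le_trans (Matrix.rank_le_card_height A) (by simp)
    have hσρ : 0 < sval A ρ := PNRP.sval_pos A hρ1 (le_of_eq hρ.symm)
    obtain ⟨x, hx1, hx2⟩ := PNRP.exists_min_vec (A * H) hr1
    have hAH : A * H = S * (svdSigma A * (Tᵀ * H)) := by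
      conv_lhs => rw [hA]
      simp only [Matrix.mul_assoc]
    have hdot1 : ((A * H) *ᵥ x) ⬝ᵥ ((A * H) *ᵥ x)
        = (svdSigma A *ᵥ ((Tᵀ * H) *ᵥ x)) ⬝ᵥ (svdSigma A *ᵥ ((Tᵀ * H) *ᵥ x)) := by
      rw [hAH, ← Matrix.mulVec_mulVec, PNRP.orth_dot hS, ← Matrix.mulVec_mulVec]
    have hLx : (lead (Tᵀ * H) ρ r hρn le_rfl) *ᵥ x
        = fun i : Fin ρ => ((Tᵀ * H) *ᵥ x) (Fin.castLE hρn i) := rfl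
    have hkey : (sval A ρ * sval (lead (Tᵀ * H) ρ r hρn le_rfl) r) ^ 2
        ≤ sval (A * H) r ^ 2 := by
      rw [mul_pow, ← hx2, hdot1, PNRP.dot_sq]
      have hstep1 : sval (lead (Tᵀ * H) ρ r hρn le_rfl) r ^ 2 * (x ⬝ᵥ x)
          ≤ ((lead (Tᵀ * H) ρ r hρn le_rfl) *ᵥ x) ⬝ᵥ ((lead (Tᵀ * H) ρ r hρn le_rfl) *ᵥ x) :=
        PNRP.sval_sq_le_dot _ hr1 x
      rw [hx1, mul_one] at hstep1
      have hstep2 : ((lead (Tᵀ * H) ρ r hρn le_rfl) *ᵥ x) ⬝ᵥ ((lead (Tᵀ * H) ρ r hρn le_rfl) *ᵥ x)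
          = ∑ i : Fin ρ, ((Tᵀ * H) *ᵥ x) (Fin.castLE hρn i) ^ 2 := by
        rw [PNRP.dot_sq, hLx]
      have hterm : ∀ i : Fin ρ, sval A ρ ^ 2 * ((Tᵀ * H) *ᵥ x) (Fin.castLE hρn i) ^ 2
          ≤ (fun j : Fin m => ((svdSigma A *ᵥ ((Tᵀ * H) *ᵥ x)) j) ^ 2) (Fin.castLE hρm i) := by
        intro i
        dsimp only
        have hin : ((Fin.castLE hρm i : Fin m) : ℕ) < n := lt_of_lt_of_le i.isLt hρn
        rw [show svdSigma A = PNRP.natdiag m n (fun k => sval A (k + 1)) from rfl,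
          PNRP.natdiag_mulVec, dif_pos hin, mul_pow]
        have hy' : (⟨((Fin.castLE hρm i : Fin m) : ℕ), hin⟩ : Fin n) = Fin.castLE hρn i := rfl
        rw [hy']
        refine mul_le_mul_of_nonneg_right ?_ (sq_nonneg _)
        refine pow_le_pow_left₀ (le_of_lt hσρ) ?_ 2
        have hci : ((Fin.castLE hρm i : Fin m) : ℕ) = (i : ℕ) := rfl
        have hil := i.isLt
        exact PNRP.sval_antitone A (by omega) (by omega) hρn
      calc sval A ρ ^ 2 * sval (lead (Tᵀ * H) ρ r hρn le_rfl) r ^ 2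
          ≤ sval A ρ ^ 2
              * (((lead (Tᵀ * H) ρ r hρn le_rfl) *ᵥ x) ⬝ᵥ ((lead (Tᵀ * H) ρ r hρn le_rfl) *ᵥ x)) :=
            mul_le_mul_of_nonneg_left hstep1 (sq_nonneg _)
        _ = ∑ i : Fin ρ, sval A ρ ^ 2 * ((Tᵀ * H) *ᵥ x) (Fin.castLE hρn i) ^ 2 := by
            rw [hstep2, Finset.mul_sum]
        _ ≤ ∑ i : Fin ρ, (fun j : Fin m => ((svdSigma A *ᵥ ((Tᵀ * H) *ᵥ x)) j) ^ 2)
              (Fin.castLE hρm i) :=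
            Finset.sum_le_sum fun i _ => hterm i
        _ ≤ ∑ j : Fin m, ((svdSigma A *ᵥ ((Tᵀ * H) *ᵥ x)) j) ^ 2 :=
            PNRP.sum_fin_le_sum_range hρm _ (fun j => sq_nonneg _)
    have hmain : sval A ρ * sval (lead (Tᵀ * H) ρ r hρn le_rfl) r ≤ sval (A * H) r := by
      have h1 : 0 ≤ sval A ρ * sval (lead (Tᵀ * H) ρ r hρn le_rfl) r :=
        mul_nonneg (PNRP.sval_nonneg A ρ) (PNRP.sval_nonneg _ r)
      have h2 : 0 ≤ sval (A * H) r := PNRP.sval_nonneg _ _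
      have h3 := Real.sqrt_le_sqrt hkey
      rwa [Real.sqrt_sq h1, Real.sqrt_sq h2] at h3
    have hspecA : spec (pinv A) = (sval A ρ)⁻¹ :=
      PNRP.spec_pinv_svd A ρ hρ hρn hρm hρ1 S T hS hT hA
    refine ⟨⟨hmain, ?_⟩, ?_⟩
    · rw [hspecA, div_eq_mul_inv, inv_inv, mul_comm]
    · intro hrAH hrL
      have hσL : 0 < sval (lead (Tᵀ * H) ρ r hρn le_rfl) r :=
        PNRP.sval_pos _ hr1 (le_of_eq hrL.symm)
      have hchain1 : spec (pinv (A * H)) ≤ (sval (A * H) r)⁻¹ :=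
        PNRP.spec_pinv_le _ hr1 hrAH
      have hchain2 : (sval (A * H) r)⁻¹
          ≤ (sval A ρ * sval (lead (Tᵀ * H) ρ r hρn le_rfl) r)⁻¹ :=
        inv_anti₀ (mul_pos hσρ hσL) hmain
      have hchain4 : (sval (lead (Tᵀ * H) ρ r hρn le_rfl) r)⁻¹
          ≤ spec (pinv (lead (Tᵀ * H) ρ r hρn le_rfl)) :=
        PNRP.inv_sval_le_spec_pinv _ hr1 hrL
      calc spec (pinv (A * H)) ≤ (sval (A * H) r)⁻¹ := hchain1
        _ ≤ (sval A ρ * sval (lead (Tᵀ * H) ρ r hρn le_rfl) r)⁻¹ := hchain2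
        _ = (sval A ρ)⁻¹ * (sval (lead (Tᵀ * H) ρ r hρn le_rfl) r)⁻¹ := by rw [mul_inv]
        _ ≤ (sval A ρ)⁻¹ * spec (pinv (lead (Tᵀ * H) ρ r hρn le_rfl)) :=
            mul_le_mul_of_nonneg_left hchain4 (by positivity)
        _ = spec (pinv A) * spec (pinv (lead (Tᵀ * H) ρ r hρn le_rfl)) := by rw [hspecA]
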